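/- Let X be an infinite Tychonoff space. If the space Cp(X) is productively Fréchet–Urysohn, then X is productively γ: for every infinite Tychonoff γ-space Y, the product space X × Y is a γ-space. -/

import Mathlib

open Set

universe u v

/-- `Cp X`: continuous real-valued functions on `X` with the topology of pointwise
convergence. -/
def Cp (X : Type u) [TopologicalSpace X] : Type u := {f : X → ℝ // Continuous f}

instance Cp.instTopologicalSpace (X : Type u) [TopologicalSpace X] :
    TopologicalSpace (Cp X) :=
  inferInstanceAs (TopologicalSpace {f : X → ℝ // Continuous f})

/-- A space `Z` is productively Fréchet–Urysohn if `Z × W` is Fréchet–Urysohn for every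
Fréchet–Urysohn topological space `W`. -/
def ProductivelyFrechetUrysohn (Z : Type u) [TopologicalSpace Z] : Prop :=
  ∀ (W : Type v) [TopologicalSpace W], FrechetUrysohnSpace W → FrechetUrysohnSpace (Z × W)

/-- An ω-cover of `X`. -/
def IsOmegaCover (X : Type u) [TopologicalSpace X] (𝒰 : Set (Set X)) : Prop :=
  (∀ U ∈ 𝒰, IsOpen U) ∧ (∀ U ∈ 𝒰, ¬ (Set.univ : Set X) ⊆ U) ∧
    ∀ F : Set X, F.Finite → ∃ U ∈ 𝒰, F ⊆ U

/-- A γ-cover of `X`. -/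
def IsGammaCover (X : Type u) [TopologicalSpace X] (𝒰 : Set (Set X)) : Prop :=
  𝒰.Infinite ∧ (∀ U ∈ 𝒰, IsOpen U) ∧ (∀ U ∈ 𝒰, ¬ (Set.univ : Set X) ⊆ U) ∧
    ∀ x : X, {U ∈ 𝒰 | x ∉ U}.Finite

/-- `X` is a γ-space if every ω-cover of `X` contains a γ-cover of `X`. -/
def GammaSpace (X : Type u) [TopologicalSpace X] : Prop :=
  ∀ 𝒰 : Set (Set X), IsOmegaCover X 𝒰 → ∃ 𝒱 ⊆ 𝒰, IsGammaCover X 𝒱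

/- ### Auxiliary lemmas -/

section Aux

/-- Point separation property needed for the easy Gerlits–Nagy direction. -/
def PointSep (Z : Type*) [TopologicalSpace Z] : Prop :=
  ∀ (x : Z) (U : Set Z), IsOpen U → x ∈ U →
    ∃ f : Z → ℝ, Continuous f ∧ f x = 0 ∧ ∀ z ∉ U, f z = 1

lemma pointSep_of_t35 (Z : Type*) [TopologicalSpace Z] [T35Space Z] : PointSep Z := by
  intro x U hU hxU
  obtain ⟨f, hf, hfx, hfK⟩ :=
    CompletelyRegularSpace.completely_regular x Uᶜ hU.isClosed_compl (by simpa using hxU)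
  refine ⟨fun z => (f z : ℝ), continuous_subtype_val.comp hf, by simp [hfx], ?_⟩
  intro z hz
  have := hfK hz
  simp [this]

lemma pointSep_sum {X : Type u} {Y : Type v} [TopologicalSpace X] [TopologicalSpace Y]
    (hX : PointSep X) (hY : PointSep Y) : PointSep (X ⊕ Y) := by
  intro x U hU hxU
  cases x with
  | inl a =>
    obtain ⟨f, hf, hfx, hf1⟩ := hX a (Sum.inl ⁻¹' U) (hU.preimage continuous_inl) hxU
    refine ⟨Sum.elim f (fun _ => 1), hf.sumElim continuous_const, hfx, ?_⟩
    rintro (z | z) hz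
    · exact hf1 z hz
    · rfl
  | inr b =>
    obtain ⟨f, hf, hfx, hf1⟩ := hY b (Sum.inr ⁻¹' U) (hU.preimage continuous_inr) hxU
    refine ⟨Sum.elim (fun _ => 1) f, continuous_const.sumElim hf, hfx, ?_⟩
    rintro (z | z) hz
    · rfl
    · exact hf1 z hz

/-- From pointwise separation, separate a finite set from the complement of an open set. -/
lemma finiteSep {Z : Type*} [TopologicalSpace Z] (hp : PointSep Z)
    {F U : Set Z} (hF : F.Finite) (hU : IsOpen U) (hFU : F ⊆ U) :
    ∃ f : Z → ℝ, Continuous f ∧ (∀ z ∈ F, f z = 0) ∧ ∀ z ∉ U, f z = 1 := by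
  choose g hg hg0 hg1 using fun (a : F) => hp a U hU (hFU a.2)
  classical
  refine ⟨fun z => ∏ a ∈ hF.toFinset.attach,
      g ⟨a.1, (hF.mem_toFinset).1 a.2⟩ z, ?_, ?_, ?_⟩
  · exact continuous_finset_prod _ fun a _ => hg _
  · intro z hz
    exact Finset.prod_eq_zero (Finset.mem_attach _ ⟨z, hF.mem_toFinset.2 hz⟩)
      (by simpa using hg0 ⟨z, hz⟩)
  · intro z hz
    exact Finset.prod_eq_one fun a _ => hg1 _ z hz

end Aux

section CpStuff

open Filter Topology

variable {Z : Type*} [TopologicalSpace Z]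

lemma frechetUrysohn_of_homeomorph {A B : Type*} [TopologicalSpace A] [TopologicalSpace B]
    (e : A ≃ₜ B) (h : FrechetUrysohnSpace A) : FrechetUrysohnSpace B := by
  constructor
  intro s b hb
  have h1 : e.symm b ∈ closure (e.symm '' s) :=
    image_closure_subset_closure_image (s := s) e.symm.continuous ⟨b, hb, rfl⟩
  obtain ⟨u, hu, hconv⟩ := mem_closure_iff_seq_limit.1 h1
  refine ⟨fun n => e (u n), fun n => ?_, ?_⟩
  · obtain ⟨w, hw, hwu⟩ := hu n
    simpa [← hwu] using hw
  · have : Filter.Tendsto e (nhds (e.symm b)) (nhds (e (e.symm b))) :=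
      e.continuous.continuousAt
    simpa [Function.comp_def] using this.comp hconv

lemma cp_eval_continuous' {Z : Type*} [TopologicalSpace Z] (z : Z) :
    Continuous (fun g : Cp Z => g.1 z) := by
  have h1 : Continuous (fun g : {f : Z → ℝ // Continuous f} => (g.1 : Z → ℝ)) :=
    continuous_subtype_val
  exact (continuous_apply z).comp h1

/-- `Cp (X ⊕ Y)` is homeomorphic to `Cp X × Cp Y`. -/
noncomputable def cpSumHomeo (X : Type u) (Y : Type v) [TopologicalSpace X]
    [TopologicalSpace Y] : Cp (X ⊕ Y) ≃ₜ Cp X × Cp Y where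
  toFun f := (⟨fun x => f.1 (Sum.inl x), f.2.comp continuous_inl⟩,
    ⟨fun y => f.1 (Sum.inr y), f.2.comp continuous_inr⟩)
  invFun p := ⟨Sum.elim p.1.1 p.2.1, p.1.2.sumElim p.2.2⟩
  left_inv f := by
    apply Subtype.ext
    funext z
    cases z <;> rfl
  right_inv p := by
    refine Prod.ext (Subtype.ext rfl) (Subtype.ext rfl)
  continuous_toFun := by
    refine Continuous.prodMk ?_ ?_
    · exact Continuous.subtype_mk (continuous_pi fun x =>
        cp_eval_continuous' (Sum.inl x)) _
    · exact Continuous.subtype_mk (continuous_pi fun y =>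
        cp_eval_continuous' (Sum.inr y)) _
  continuous_invFun := by
    refine Continuous.subtype_mk (continuous_pi fun z => ?_) _
    cases z with
    | inl x => exact (cp_eval_continuous' x).comp continuous_fst
    | inr y => exact (cp_eval_continuous' y).comp continuous_snd

/-- From membership in the closure, finite approximations exist. -/
lemma exists_near {A : Set (Cp Z)} {f : Cp Z} (hf : f ∈ closure A)
    {F : Set Z} (hF : F.Finite) {ε : ℝ} (hε : 0 < ε) :
    ∃ g ∈ A, ∀ z ∈ F, |g.1 z - f.1 z| < ε := by
  set O : Set (Cp Z) := ⋂ z ∈ F, (fun g : Cp Z => g.1 z) ⁻¹' Metric.ball (f.1 z) ε with hO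
  have hOopen : IsOpen O :=
    hF.isOpen_biInter fun z _ => (Metric.isOpen_ball).preimage (cp_eval_continuous' z)
  have hfO : f ∈ O := Set.mem_iInter₂.2 fun z _ => Metric.mem_ball_self hε
  obtain ⟨g, hgO, hgA⟩ := _root_.mem_closure_iff.1 hf O hOopen hfO
  refine ⟨g, hgA, fun z hz => ?_⟩
  have := Set.mem_iInter₂.1 hgO z hz
  simpa [Real.dist_eq] using this

/-- The easy Gerlits–Nagy direction: if `Cp Z` is Fréchet–Urysohn and `Z` has enough
separating functions, then `Z` is a γ-space. -/
theorem gammaSpace_of_fu (hp : PointSep Z) (hfu : FrechetUrysohnSpace (Cp Z)) :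
    GammaSpace Z := by
  classical
  intro 𝒰 ⟨hopen, hproper, hcov⟩
  set A : Set (Cp Z) := {f | ∃ U ∈ 𝒰, ∀ z ∉ U, f.1 z = 1} with hA
  set z0 : Cp Z := ⟨fun _ => 0, continuous_const⟩ with hz0
  -- 0 is in the closure of A
  have hcl : z0 ∈ closure A := by
    rw [_root_.mem_closure_iff]
    intro o ho hz0o
    obtain ⟨o', ho', rfl⟩ := isOpen_induced_iff.1 ho
    obtain ⟨I, w, hw, hsub⟩ := isOpen_pi_iff.1 ho' z0.1 hz0o
    obtain ⟨U, hU𝒰, hIU⟩ := hcov (I : Set Z) I.finite_toSet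
    obtain ⟨g, hgc, hg0, hg1⟩ := finiteSep hp I.finite_toSet (hopen U hU𝒰) hIU
    refine ⟨⟨g, hgc⟩, ?_, U, hU𝒰, hg1⟩
    apply hsub
    intro a ha
    have hga : g a = 0 := hg0 a ha
    show g a ∈ w a
    rw [hga]
    exact (hw a ha).2
  obtain ⟨u, huA, hconv⟩ := mem_closure_iff_seq_limit.1 hcl
  choose Un hUn𝒰 hUn1 using fun n => huA n
  -- pointwise convergence to 0
  have hpt : ∀ z : Z, Tendsto (fun n => (u n).1 z) atTop (nhds 0) := fun z =>
    ((cp_eval_continuous' z).continuousAt.tendsto).comp hconv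
  -- each point is eventually in `Un n`
  have hev : ∀ z : Z, ∀ᶠ n in atTop, z ∈ Un n := by
    intro z
    have : ∀ᶠ n in atTop, (u n).1 z ∈ Metric.ball (0 : ℝ) (1/2) :=
      (hpt z).eventually (Metric.ball_mem_nhds _ (by norm_num))
    refine this.mono fun n hn => ?_
    by_contra hzU
    have := hUn1 n z hzU
    rw [this] at hn
    simp [Real.dist_eq] at hn
    norm_num at hn
  refine ⟨Set.range Un, ?_, ?_, ?_, ?_, ?_⟩
  · rintro V ⟨n, rfl⟩; exact hUn𝒰 n
  · -- infinite
    intro hfin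
    haveI : Finite (Set.range Un) := hfin
    obtain ⟨V, hV⟩ := Finite.exists_infinite_fiber
      (fun n => (⟨Un n, Set.mem_range_self n⟩ : Set.range Un))
    have hVinf : {n | Un n = V.1}.Infinite := by
      rw [← Set.infinite_coe_iff]
      refine @Infinite.of_injective _ _ hV (fun x => ⟨x.1, ?_⟩) ?_
      · have hx := x.2
        simp only [Set.mem_preimage, Set.mem_singleton_iff] at hx
        exact congrArg Subtype.val hx
      · intro a b hab
        exact Subtype.ext (by simpa [Subtype.ext_iff] using hab)
    apply hproper V.1 (by obtain ⟨n, hn⟩ := hVinf.nonempty; exact hn ▸ hUn𝒰 n)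
    intro z _
    obtain ⟨N, hN⟩ := (Filter.eventually_atTop).1 (hev z)
    obtain ⟨n, hn, hnN⟩ := hVinf.exists_gt N
    exact hn ▸ hN n hnN.le
  · rintro V ⟨n, rfl⟩; exact hopen _ (hUn𝒰 n)
  · rintro V ⟨n, rfl⟩; exact hproper _ (hUn𝒰 n)
  · intro z
    obtain ⟨N, hN⟩ := (Filter.eventually_atTop).1 (hev z)
    refine (Set.finite_Iio N |>.image Un).subset ?_
    rintro V ⟨⟨n, rfl⟩, hzV⟩
    refine ⟨n, ?_, rfl⟩
    by_contra hlt
    exact hzV (hN n (not_lt.1 hlt))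

end CpStuff

section Selection

open Filter

/-- A γ-space admits selections from countably many ω-covers that form an
"indexed γ-cover". -/
theorem omega_selection {Z : Type*} [TopologicalSpace Z] [T1Space Z] [Infinite Z]
    (hγ : GammaSpace Z) (𝒰 : ℕ → Set (Set Z)) (h : ∀ n, IsOmegaCover Z (𝒰 n)) :
    ∃ U : ℕ → Set Z, (∀ n, U n ∈ 𝒰 n) ∧ ∀ z : Z, ∀ᶠ n in atTop, z ∈ U n := by
  classical
  set y : ℕ ↪ Z := Infinite.natEmbedding Z with hy
  set 𝒞 : ℕ → Set (Set Z) := fun n => {V | ∃ g : ℕ → Set Z, (∀ i, g i ∈ 𝒰 i) ∧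
    V = (⋂ i ∈ Finset.range (n+1), g i) \ {y n}} with h𝒞
  set 𝒟 : Set (Set Z) := ⋃ n, 𝒞 n with h𝒟
  have hnotmem : ∀ n V, V ∈ 𝒞 n → y n ∉ V := by
    rintro n V ⟨g, hg, rfl⟩ hyn
    exact hyn.2 rfl
  have hω : IsOmegaCover Z 𝒟 := by
    refine ⟨?_, ?_, ?_⟩
    · intro V hV
      obtain ⟨n, g, hg, rfl⟩ := Set.mem_iUnion.1 hV
      exact (isOpen_biInter_finset fun i _ => (h i).1 _ (hg i)).sdiff isClosed_singleton
    · intro V hV hsub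
      obtain ⟨n, hVn⟩ := Set.mem_iUnion.1 hV
      exact hnotmem n V hVn (hsub (Set.mem_univ _))
    · intro F hF
      have hbad : (y ⁻¹' F).Finite :=
        Set.Finite.preimage (Set.injOn_of_injective y.injective) hF
      obtain ⟨n, hn⟩ := hbad.infinite_compl.nonempty
      choose g hg1 hg2 using fun i => (h i).2.2 F hF
      refine ⟨(⋂ i ∈ Finset.range (n+1), g i) \ {y n},
        Set.mem_iUnion.2 ⟨n, g, hg1, rfl⟩, ?_⟩
      intro z hz
      refine ⟨Set.mem_iInter₂.2 fun i _ => hg2 i hz, ?_⟩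
      intro hzy
      rw [Set.mem_singleton_iff] at hzy
      apply hn
      show y n ∈ F
      rw [← hzy]
      exact hz
  obtain ⟨𝒱, h𝒱𝒟, hinf, hVopen, hVproper, hVpt⟩ := hγ 𝒟 hω
  have hfiniteLevel : ∀ n, (𝒱 ∩ 𝒞 n).Finite := by
    intro n
    refine (hVpt (y n)).subset ?_
    rintro V ⟨hV𝒱, hVn⟩
    exact ⟨hV𝒱, hnotmem n V hVn⟩
  -- pick members of 𝒱 avoiding all low levels
  have hpick : ∀ m : ℕ, ∃ W, W ∈ 𝒱 ∧ ∀ n ≤ m, W ∉ 𝒞 n := by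
    intro m
    have hfin : (⋃ n ∈ Finset.range (m+1), (𝒱 ∩ 𝒞 n)).Finite :=
      Set.Finite.biUnion (Finset.range (m+1)).finite_toSet fun n _ => hfiniteLevel n
    obtain ⟨W, hW⟩ := (hinf.diff hfin).nonempty
    refine ⟨W, hW.1, fun n hn hWn => hW.2 ?_⟩
    exact Set.mem_biUnion (Finset.mem_range.2 (Nat.lt_succ_of_le hn)) ⟨hW.1, hWn⟩
  choose W hW𝒱 hWlow using hpick
  -- each W m lies in some level with a witnessing selection
  have hWlev : ∀ m, ∃ l, ∃ g : ℕ → Set Z, (∀ i, g i ∈ 𝒰 i) ∧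
      W m = (⋂ i ∈ Finset.range (l+1), g i) \ {y l} ∧ m < l := by
    intro m
    obtain ⟨l, hl⟩ := Set.mem_iUnion.1 (h𝒱𝒟 (hW𝒱 m))
    obtain ⟨g, hg, hgeq⟩ := hl
    refine ⟨l, g, hg, hgeq, ?_⟩
    by_contra hlm
    exact hWlow m l (not_lt.1 hlm) ⟨g, hg, hgeq⟩
  choose lW gW hgW hWeq hlWgt using hWlev
  refine ⟨fun n => gW n n, fun n => hgW n n, ?_⟩
  -- W n ⊆ gW n n
  have hWsub : ∀ n, W n ⊆ gW n n := by
    intro n z hz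
    rw [hWeq n] at hz
    exact Set.mem_iInter₂.1 hz.1 n (Finset.mem_range.2 (lt_trans (hlWgt n)
      (Nat.lt_succ_self _)))
  intro z
  set Bad : Set (Set Z) := {V ∈ 𝒱 | z ∉ V} with hBad
  have hBadfin : Bad.Finite := hVpt z
  have hBadlev : ∀ V ∈ Bad, ∃ n, V ∈ 𝒞 n := fun V hV => Set.mem_iUnion.1 (h𝒱𝒟 hV.1)
  choose! nv hnv using hBadlev
  set M : ℕ := hBadfin.toFinset.sup nv with hM
  refine eventually_atTop.2 ⟨M, fun m hm => ?_⟩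
  apply hWsub m
  by_contra hzW
  have hWBad : W m ∈ Bad := ⟨hW𝒱 m, hzW⟩
  have h1 : nv (W m) ≤ M := Finset.le_sup (hBadfin.mem_toFinset.2 hWBad)
  exact hWlow m (nv (W m)) (le_trans h1 hm) (hnv _ hWBad)

end Selection

section GNhard

open Filter Topology

lemma cp_tendsto_iff {Z : Type*} [TopologicalSpace Z] {l : Filter ℕ} {u : ℕ → Cp Z}
    {f : Cp Z} :
    Tendsto u l (nhds f) ↔ ∀ z, Tendsto (fun n => (u n).1 z) l (nhds (f.1 z)) := by
  constructor
  · intro h z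
    exact ((cp_eval_continuous' z).continuousAt.tendsto).comp h
  · intro h
    have h2 : Tendsto (fun n => (u n).1) l (nhds f.1) := tendsto_pi_nhds.2 h
    exact (tendsto_subtype_rng (p := fun g : Z → ℝ => Continuous g)).2 h2

/-- The hard Gerlits–Nagy direction: a γ-space has Fréchet–Urysohn `Cp`. -/
theorem fu_of_gamma {Y : Type*} [TopologicalSpace Y] [T1Space Y] [Infinite Y]
    (hγ : GammaSpace Y) : FrechetUrysohnSpace (Cp Y) := by
  classical
  constructor
  intro A f hf
  have hbase : Tendsto (fun n : ℕ => 1 / ((n : ℝ) + 1)) atTop (nhds 0) :=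
    tendsto_one_div_add_atTop_nhds_zero_nat
  by_cases hP : ∀ n : ℕ, ∃ g ∈ A, ∀ z, |g.1 z - f.1 z| < 1 / ((n : ℝ) + 1)
  · -- uniform approximations exist; they converge to f
    choose u huA hu using hP
    refine ⟨u, huA, cp_tendsto_iff.2 fun z => ?_⟩
    rw [tendsto_iff_dist_tendsto_zero]
    refine squeeze_zero (fun n => dist_nonneg) (fun n => ?_) hbase
    rw [Real.dist_eq]
    exact (hu n z).le
  · push_neg at hP
    obtain ⟨N, hN⟩ := hP
    -- the ω-covers of "(1/(n+N+1))-closeness to f" sets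
    set E : ℕ → Cp Y → Set Y :=
      fun n g => {z | |g.1 z - f.1 z| < 1 / ((n : ℝ) + N + 1)} with hE
    have hEopen : ∀ n g, IsOpen (E n g) := fun n g =>
      isOpen_lt ((g.2.sub f.2).abs) continuous_const
    have hεpos : ∀ n : ℕ, 0 < 1 / ((n : ℝ) + N + 1) := fun n => by positivity
    have hεle : ∀ n : ℕ, 1 / ((n : ℝ) + N + 1) ≤ 1 / ((N : ℝ) + 1) := fun n =>
      one_div_le_one_div_of_le (by positivity) (by linarith [Nat.cast_nonneg (α := ℝ) n])
    set 𝒰 : ℕ → Set (Set Y) :=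
      fun n => {U | ∃ g ∈ A, (¬ (Set.univ : Set Y) ⊆ E n g) ∧ U = E n g} with h𝒰
    have hω : ∀ n, IsOmegaCover Y (𝒰 n) := by
      intro n
      refine ⟨?_, ?_, ?_⟩
      · rintro U ⟨g, hg, hgp, rfl⟩; exact hEopen n g
      · rintro U ⟨g, hg, hgp, rfl⟩; exact hgp
      · intro F hF
        obtain ⟨g, hgA, hgF⟩ := exists_near hf hF (hεpos n)
        have hgp : ¬ (Set.univ : Set Y) ⊆ E n g := by
          intro hsub
          obtain ⟨z, hz⟩ := hN g hgA
          have h3 : |g.1 z - f.1 z| < 1 / ((n : ℝ) + N + 1) := hsub (Set.mem_univ z)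
          have h4 := hεle n
          linarith
        exact ⟨E n g, ⟨g, hgA, hgp, rfl⟩, fun z hz => hgF z hz⟩
    obtain ⟨U, hU𝒰, hUev⟩ := omega_selection hγ 𝒰 hω
    choose g hgA hgp hgeq using hU𝒰
    refine ⟨g, hgA, cp_tendsto_iff.2 fun z => ?_⟩
    rw [tendsto_iff_dist_tendsto_zero]
    refine squeeze_zero' (Eventually.of_forall fun n => dist_nonneg) ?_ hbase
    refine (hUev z).mono fun n hn => ?_
    rw [hgeq n] at hn
    have h1 : |(g n).1 z - f.1 z| < 1 / ((n : ℝ) + N + 1) := hn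
    have h2 : (1 : ℝ) / ((n : ℝ) + N + 1) ≤ 1 / ((n : ℝ) + 1) :=
      one_div_le_one_div_of_le (by positivity) (by linarith [Nat.cast_nonneg (α := ℝ) N])
    rw [Real.dist_eq]
    linarith

end GNhard

section Permanence

/-- The γ-property passes to squares. -/
theorem gammaSpace_sq {Z : Type*} [TopologicalSpace Z] (hγ : GammaSpace Z) :
    GammaSpace (Z × Z) := by
  classical
  intro 𝒲 ⟨hopen, hproper, hcov⟩
  set 𝒰 : Set (Set Z) := {U | IsOpen U ∧ ∃ W ∈ 𝒲, U ×ˢ U ⊆ W} with h𝒰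
  have huproper : ∀ U ∈ 𝒰, ¬ (Set.univ : Set Z) ⊆ U := by
    rintro U ⟨hUo, W, hW𝒲, hUW⟩ hsub
    refine hproper W hW𝒲 fun p _ => hUW ?_
    exact ⟨hsub (Set.mem_univ p.1), hsub (Set.mem_univ p.2)⟩
  have hω : IsOmegaCover Z 𝒰 := by
    refine ⟨fun U hU => hU.1, huproper, ?_⟩
    intro F hF
    obtain ⟨W, hW𝒲, hGW⟩ := hcov (F ×ˢ F) (hF.prod hF)
    have hsel : ∀ a ∈ F, ∀ b ∈ F, ∃ u1 v1 : Set Z, IsOpen u1 ∧ IsOpen v1 ∧ a ∈ u1 ∧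
        b ∈ v1 ∧ u1 ×ˢ v1 ⊆ W := by
      intro a ha b hb
      obtain ⟨u1, v1, h1, h2, h3, h4, h5⟩ :=
        isOpen_prod_iff.1 (hopen W hW𝒲) a b (hGW ⟨ha, hb⟩)
      exact ⟨u1, v1, h1, h2, h3, h4, h5⟩
    choose! A B hAo hBo hAm hBm hAB using hsel
    set Ft := hF.toFinset with hFt
    have hFtF : ∀ c ∈ Ft, c ∈ F := fun c hc => hF.mem_toFinset.1 hc
    set O : Z → Set Z := fun c => (⋂ b ∈ Ft, A c b) ∩ (⋂ a ∈ Ft, B a c) with hO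
    set U : Set Z := ⋃ c ∈ Ft, O c with hU
    have hUopen : IsOpen U := by
      refine isOpen_biUnion fun c hc => IsOpen.inter ?_ ?_
      · exact isOpen_biInter_finset fun b hb => hAo c (hFtF c hc) b (hFtF b hb)
      · exact isOpen_biInter_finset fun a ha => hBo a (hFtF a ha) c (hFtF c hc)
    have hFU : F ⊆ U := by
      intro c hc
      have hc' : c ∈ Ft := hF.mem_toFinset.2 hc
      refine Set.mem_biUnion hc' ⟨?_, ?_⟩
      · exact Set.mem_iInter₂.2 fun b hb => hAm c hc b (hFtF b hb)
      · exact Set.mem_iInter₂.2 fun a ha => hBm a (hFtF a ha) c hc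
    have hUsq : U ×ˢ U ⊆ W := by
      rintro ⟨x, y⟩ ⟨hx, hy⟩
      obtain ⟨c, hc, hxc⟩ := Set.mem_iUnion₂.1 hx
      obtain ⟨d, hd, hyd⟩ := Set.mem_iUnion₂.1 hy
      have hx' : x ∈ A c d := Set.mem_iInter₂.1 hxc.1 d hd
      have hy' : y ∈ B c d := Set.mem_iInter₂.1 hyd.2 c hc
      exact hAB c (hFtF c hc) d (hFtF d hd) ⟨hx', hy'⟩
    exact ⟨U, ⟨hUopen, W, hW𝒲, hUsq⟩, hFU⟩
  obtain ⟨𝒱, h𝒱𝒰, hVinf, hVopen, hVproper, hVpt⟩ := hγ 𝒰 hω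
  have hsel2 : ∀ V ∈ 𝒱, ∃ W ∈ 𝒲, V ×ˢ V ⊆ W := fun V hV => (h𝒱𝒰 hV).2
  choose! m hm𝒲 hmsub using hsel2
  refine ⟨{W | ∃ V ∈ 𝒱, W = m V}, ?_, ?_, ?_, ?_, ?_⟩
  · rintro W ⟨V, hV, rfl⟩; exact hm𝒲 V hV
  · -- infinite
    intro hfin
    have hfib : ∃ W ∈ {W | ∃ V ∈ 𝒱, W = m V}, {V ∈ 𝒱 | m V = W}.Infinite := by
      by_contra hall
      push_neg at hall
      apply hVinf
      have : 𝒱 ⊆ ⋃ W ∈ {W | ∃ V ∈ 𝒱, W = m V}, {V ∈ 𝒱 | m V = W} := by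
        intro V hV
        exact Set.mem_biUnion ⟨V, hV, rfl⟩ ⟨hV, rfl⟩
      refine Set.Finite.subset (Set.Finite.biUnion hfin fun W hW => ?_) this
      rw [← Set.not_infinite]
      exact Set.not_infinite.2 (hall W hW)
    obtain ⟨W, hW, hWfib⟩ := hfib
    obtain ⟨V0, hV0, rfl⟩ := hW
    refine hproper (m V0) (hm𝒲 V0 hV0) ?_
    rintro ⟨x, y⟩ -
    have hBfin : ({V ∈ 𝒱 | x ∉ V} ∪ {V ∈ 𝒱 | y ∉ V}).Finite := (hVpt x).union (hVpt y)
    obtain ⟨V, hV⟩ := (hWfib.diff hBfin).nonempty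
    have hxV : x ∈ V := by
      by_contra hx
      exact hV.2 (Set.mem_union_left _ ⟨hV.1.1, hx⟩)
    have hyV : y ∈ V := by
      by_contra hy
      exact hV.2 (Set.mem_union_right _ ⟨hV.1.1, hy⟩)
    rw [← hV.1.2]
    exact hmsub V hV.1.1 ⟨hxV, hyV⟩
  · rintro W ⟨V, hV, rfl⟩; exact hopen _ (hm𝒲 V hV)
  · rintro W ⟨V, hV, rfl⟩; exact hproper _ (hm𝒲 V hV)
  · rintro ⟨x, y⟩
    have hBfin : ({V ∈ 𝒱 | x ∉ V} ∪ {V ∈ 𝒱 | y ∉ V}).Finite := (hVpt x).union (hVpt y)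
    refine (hBfin.image m).subset ?_
    rintro W ⟨⟨V, hV, rfl⟩, hxyW⟩
    refine ⟨V, ?_, rfl⟩
    by_contra hVB
    simp only [Set.mem_union, Set.mem_setOf_eq, not_or, not_and, not_not] at hVB
    exact hxyW (hmsub V hV ⟨hVB.1 hV, hVB.2 hV⟩)

/-- The γ-property passes to closed subspaces (given via a closed embedding). -/
theorem gammaSpace_of_closedEmbedding {S Z : Type*} [TopologicalSpace S] [TopologicalSpace Z]
    {e : S → Z} (hind : Topology.IsInducing e) (hinj : Function.Injective e)
    (hcl : IsClosed (Set.range e)) (hγ : GammaSpace Z) : GammaSpace S := by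
  classical
  intro 𝒰 ⟨hopen, hproper, hcov⟩
  have hExt : ∀ U ∈ 𝒰, ∃ V, IsOpen V ∧ e ⁻¹' V = U := fun U hU =>
    hind.isOpen_iff.1 (hopen U hU)
  choose! Ext hE1 hE2 using hExt
  set m : Set S → Set Z := fun U => Ext U ∪ (Set.range e)ᶜ with hm
  have hpre : ∀ U ∈ 𝒰, e ⁻¹' (m U) = U := by
    intro U hU
    rw [hm]
    simp only [Set.preimage_union, Set.preimage_compl]
    rw [hE2 U hU]
    have : e ⁻¹' (Set.range e) = Set.univ := by
      ext s; simp [Set.mem_range_self]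
    rw [this]
    simp
  have hω : IsOmegaCover Z {W | ∃ U ∈ 𝒰, W = m U} := by
    refine ⟨?_, ?_, ?_⟩
    · rintro W ⟨U, hU, rfl⟩
      exact (hE1 U hU).union hcl.isOpen_compl
    · rintro W ⟨U, hU, rfl⟩ hsub
      refine hproper U hU fun s _ => ?_
      have : e s ∈ m U := hsub (Set.mem_univ _)
      rw [← hpre U hU]
      exact this
    · intro G hG
      have hFfin : (e ⁻¹' G).Finite := hG.preimage (Set.injOn_of_injective hinj)
      obtain ⟨U, hU, hFU⟩ := hcov (e ⁻¹' G) hFfin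
      refine ⟨m U, ⟨U, hU, rfl⟩, ?_⟩
      intro g hg
      by_cases hgr : g ∈ Set.range e
      · obtain ⟨s, rfl⟩ := hgr
        have : s ∈ U := hFU hg
        rw [← hpre U hU] at this
        exact this
      · exact Set.mem_union_right _ hgr
  obtain ⟨𝒲, h𝒲sub, h𝒲inf, h𝒲open, h𝒲proper, h𝒲pt⟩ := hγ _ hω
  set 𝒱 : Set (Set S) := {U ∈ 𝒰 | m U ∈ 𝒲} with h𝒱
  have hmem : ∀ W ∈ 𝒲, ∃ U ∈ 𝒱, m U = W := by
    intro W hW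
    obtain ⟨U, hU, rfl⟩ := h𝒲sub hW
    exact ⟨U, ⟨hU, hW⟩, rfl⟩
  have hmInj : ∀ U ∈ 𝒰, ∀ U' ∈ 𝒰, m U = m U' → U = U' := by
    intro U hU U' hU' hmm
    rw [← hpre U hU, ← hpre U' hU', hmm]
  refine ⟨𝒱, fun U hU => hU.1, ?_, fun U hU => hopen _ hU.1,
    fun U hU => hproper _ hU.1, ?_⟩
  · -- infinite
    intro hfin
    refine h𝒲inf (Set.Finite.subset (hfin.image m) ?_)
    intro W hW
    obtain ⟨U, hU, rfl⟩ := hmem W hW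
    exact ⟨U, hU, rfl⟩
  · intro s
    refine Set.Finite.of_finite_image (f := m) ?_ ?_
    · refine (h𝒲pt (e s)).subset ?_
      rintro W ⟨U, ⟨⟨hU𝒰, hmU⟩, hsU⟩, rfl⟩
      refine ⟨hmU, fun hesW => hsU ?_⟩
      rw [← hpre U hU𝒰]
      exact hesW
    · intro U hU U' hU' hmm
      exact hmInj U hU.1.1 U' hU'.1.1 hmm

end Permanence

theorem stmt10 (X : Type u) [TopologicalSpace X] [T35Space X] [Infinite X]
    (h : ProductivelyFrechetUrysohn.{u, v} (Cp X)) :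
    ∀ (Y : Type v) [TopologicalSpace Y] [T35Space Y] [Infinite Y],
      GammaSpace Y → GammaSpace (X × Y) := by
  intro Y _ _ _ hY
  -- Y is γ, hence Cp Y is Fréchet–Urysohn
  have hfuY : FrechetUrysohnSpace (Cp Y) := fu_of_gamma hY
  -- productivity gives FU of the product, hence of Cp of the sum
  have hfuP : FrechetUrysohnSpace (Cp X × Cp Y) := h (Cp Y) hfuY
  have hfuSum : FrechetUrysohnSpace (Cp (X ⊕ Y)) :=
    frechetUrysohn_of_homeomorph (cpSumHomeo X Y).symm hfuP
  -- hence the sum is a γ-space, hence so is its square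
  have hsum : GammaSpace (X ⊕ Y) :=
    gammaSpace_of_fu (pointSep_sum (pointSep_of_t35 X) (pointSep_of_t35 Y)) hfuSum
  have hsq : GammaSpace ((X ⊕ Y) × (X ⊕ Y)) := gammaSpace_sq hsum
  -- X × Y is a closed subspace of the square of the sum
  have hemb : Topology.IsEmbedding (Prod.map (Sum.inl : X → X ⊕ Y) (Sum.inr : Y → X ⊕ Y)) :=
    Topology.IsClosedEmbedding.inl.toIsEmbedding.prodMap
      Topology.IsClosedEmbedding.inr.toIsEmbedding
  have hclosed : IsClosed (Set.range (Prod.map (Sum.inl : X → X ⊕ Y) (Sum.inr : Y → X ⊕ Y))) := by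
    rw [Set.range_prodMap]
    exact isClosed_range_inl.prod isClosed_range_inr
  exact gammaSpace_of_closedEmbedding hemb.toIsInducing hemb.injective hclosed hsq
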